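/- Assume (A1) primitivity. Then there exist n ≥ 1, p ∈ 𝒫 and x ∈ ℝ^d with p + x ∈ ω^n(p) and p + x contained in the interior of supp(ω^n(p)). For any such n, p, x, the contraction y ↦ λ^{−n}y + x maps supp(ω^n(p)) into itself and has a unique fixed point y₀; the tile t = p + x − y₀ satisfies t ∈ ω^n(t) and contains 0 in its interior, and T = ∪_{k≥0} ω^{kn}(t) is a tiling belonging to Ω with ω^n(T) = T whose unique tile containing 0 is t. -/

import Mathlib

open Metric Set Pointwise

noncomputable section

/-- Points of `ℝ^d`. -/
abbrev Pt (d : ℕ) := EuclideanSpace ℝ (Fin d)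

/-- A (possibly labelled) tile in `ℝ^d`: a subset of `ℝ^d` together with a label. -/
structure Tile (d : ℕ) where
  carrier : Set (Pt d)
  label : ℕ

instance {d : ℕ} : Inhabited (Tile d) := ⟨⟨∅, 0⟩⟩

/-- Translate of a tile by a vector. -/
def Tile.translate {d : ℕ} (t : Tile d) (x : Pt d) : Tile d :=
  ⟨(fun y => y + x) '' t.carrier, t.label⟩

/-- A tile proper: homeomorphic to the closed unit ball. -/
def Tile.IsTile {d : ℕ} (t : Tile d) : Prop :=
  Nonempty (t.carrier ≃ₜ (Metric.closedBall (0 : Pt d) 1))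

/-- Support of a partial tiling: the union of its tiles. -/
def psupp {d : ℕ} (P : Set (Tile d)) : Set (Pt d) := ⋃ t ∈ P, t.carrier

/-- `tilesAt P U` = the tiles of `P` meeting `U`, written `P(U)` in the paper. -/
def tilesAt {d : ℕ} (P : Set (Tile d)) (U : Set (Pt d)) : Set (Tile d) :=
  {t ∈ P | (t.carrier ∩ U).Nonempty}

/-- Translate of a collection of tiles. -/
def translateSet {d : ℕ} (P : Set (Tile d)) (x : Pt d) : Set (Tile d) :=
  (fun t => t.translate x) '' P

/-- A partial tiling: tiles with pairwise disjoint interiors. -/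
def IsPartialTiling {d : ℕ} (P : Set (Tile d)) : Prop :=
  (∀ t ∈ P, t.IsTile) ∧
  ∀ t ∈ P, ∀ t' ∈ P, t ≠ t' → interior t.carrier ∩ interior t'.carrier = ∅

/-- A patch: a finite partial tiling. -/
def IsPatch {d : ℕ} (P : Set (Tile d)) : Prop := IsPartialTiling P ∧ P.Finite

/-- A tiling of all of `ℝ^d`. -/
def IsTilingOfSpace {d : ℕ} (P : Set (Tile d)) : Prop :=
  IsPartialTiling P ∧ psupp P = univ

/-- A substitution tiling system `(𝒫, ω)` with inflation constant `λ > 1`. -/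
structure SubstSystem (d : ℕ) where
  proto : Set (Tile d)
  proto_finite : proto.Finite
  proto_nonempty : proto.Nonempty
  proto_isTile : ∀ p ∈ proto, p.IsTile
  proto_zero_mem : ∀ p ∈ proto, (0 : Pt d) ∈ interior p.carrier
  proto_no_translate : ∀ p ∈ proto, ∀ q ∈ proto, ∀ x : Pt d,
    q = p.translate x → p = q ∧ x = 0
  lam : ℝ
  one_lt_lam : 1 < lam
  sub : Tile d → Set (Tile d)
  sub_patch : ∀ p ∈ proto, IsPatch (sub p)
  sub_proto : ∀ p ∈ proto, ∀ t ∈ sub p, ∃ q ∈ proto, ∃ x : Pt d, t = q.translate x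
  sub_supp : ∀ p ∈ proto, psupp (sub p) = lam • p.carrier
  sub_translate : ∀ (t : Tile d) (x : Pt d),
    sub (t.translate x) = (fun s => s.translate (lam • x)) '' sub t

namespace SubstSystem

variable {d : ℕ} (S : SubstSystem d)

/-- Tile-wise application of the substitution to a collection of tiles. -/
def subSet (P : Set (Tile d)) : Set (Tile d) := ⋃ t ∈ P, S.sub t

/-- Iterated substitution `ω^n` on collections of tiles. -/
def subIter (n : ℕ) (P : Set (Tile d)) : Set (Tile d) := (S.subSet)^[n] P

/-- `ω^n(t)` for a single tile `t`. -/
def omegan (n : ℕ) (t : Tile d) : Set (Tile d) := S.subIter n {t}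

/-- The continuous hull `Ω`. -/
def Omega : Set (Set (Tile d)) :=
  {T | IsTilingOfSpace T ∧ ∀ P : Set (Tile d), P ⊆ T → IsPatch P →
    ∃ n : ℕ, ∃ p ∈ S.proto, ∃ x : Pt d, P ⊆ translateSet (S.omegan n p) x}

/-- `x` is the puncture of the tile `t`, i.e. `t = p + x` for a prototile `p`. -/
def IsPuncture (t : Tile d) (x : Pt d) : Prop :=
  ∃ p ∈ S.proto, t = p.translate x

open Classical in
/-- The puncture `x(t)` of a tile `t` (chosen; unique for translates of prototiles). -/
def punc (t : Tile d) : Pt d :=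
  if h : ∃ x : Pt d, S.IsPuncture t x then h.choose else 0

/-- The punctured hull (transversal) `Ω_punc`. -/
def OmegaPunc : Set (Set (Tile d)) :=
  {T ∈ S.Omega | ∃ t ∈ T, S.IsPuncture t 0}

end SubstSystem

/-- The tiling metric. -/
def tilingDist {d : ℕ} (T T' : Set (Tile d)) : ℝ :=
  sInf ({1} ∪ {ε : ℝ | 0 < ε ∧ ∃ x x' : Pt d, ‖x‖ < ε ∧ ‖x'‖ < ε ∧
    tilesAt (translateSet T (-x)) (ball (0 : Pt d) (1 / ε)) =
      tilesAt (translateSet T' (-x')) (ball (0 : Pt d) (1 / ε))})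

namespace SubstSystem

variable {d : ℕ} (S : SubstSystem d)

/-- Density of a family of tilings in `Ω_punc` w.r.t. the tiling metric. -/
def DenseInPunc (E : Set (Set (Tile d))) : Prop :=
  ∀ T ∈ S.OmegaPunc, ∀ ε : ℝ, 0 < ε → ∃ T' ∈ E, tilingDist T T' < ε

/-- Openness of a subset of `Ω_punc` w.r.t. the tiling metric (subspace topology). -/
def OpenInPunc (E : Set (Set (Tile d))) : Prop :=
  E ⊆ S.OmegaPunc ∧ ∀ T ∈ E, ∃ ε : ℝ, 0 < ε ∧
    ∀ T' ∈ S.OmegaPunc, tilingDist T T' < ε → T' ∈ E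

/-- The translational equivalence relation `R_punc` on `Ω_punc`. -/
def Rpunc : Set (Set (Tile d) × Set (Tile d)) :=
  {TT | TT.1 ∈ S.OmegaPunc ∧ TT.2 ∈ S.OmegaPunc ∧ ∃ x : Pt d, TT.2 = translateSet TT.1 x}

/-- `Punc(n, p)`: the punctures of the tiles of `ω^n(p)`. -/
def Punc (n : ℕ) (p : Tile d) : Set (Pt d) :=
  {x | ∃ t ∈ S.omegan n p, S.IsPuncture t x}

/-- `E^n_p(x, y)`. -/
def Eset (n : ℕ) (p : Tile d) (x y : Pt d) : Set (Set (Tile d) × Set (Tile d)) :=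
  {TT | ∃ T ∈ S.OmegaPunc, p ∈ T ∧
    TT.1 = translateSet (S.subIter n T) (-x) ∧ TT.2 = translateSet (S.subIter n T) (-y)}

/-- `R_n`. -/
def Rn (n : ℕ) : Set (Set (Tile d) × Set (Tile d)) :=
  ⋃ p ∈ S.proto, ⋃ x ∈ S.Punc n p, ⋃ y ∈ S.Punc n p, S.Eset n p x y

/-- `R_AF = ∪ₙ R_n`. -/
def RAF : Set (Set (Tile d) × Set (Tile d)) := ⋃ n : ℕ, S.Rn n

/-- `U(P, t)`. -/
def Uset (P : Set (Tile d)) (t : Tile d) : Set (Set (Tile d)) :=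
  {T ∈ S.OmegaPunc | translateSet P (-(S.punc t)) ⊆ T}

/-- `V(P, t₁, t₂)`. -/
def Vset (P : Set (Tile d)) (t₁ t₂ : Tile d) : Set (Set (Tile d) × Set (Tile d)) :=
  {TT | TT.1 ∈ S.Uset P t₁ ∧ TT.2 = translateSet TT.1 (S.punc t₁ - S.punc t₂)}

/-- (A1) primitivity. -/
def Primitive : Prop :=
  ∃ N : ℕ, ∀ p ∈ S.proto, ∀ q ∈ S.proto, ∃ x : Pt d, Tile.translate q x ∈ S.omegan N p

/-- (A2) finite local complexity. -/
def FLC : Prop :=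
  ∀ R : ℝ, 0 < R → ∃ Ps : Set (Set (Tile d)), Ps.Finite ∧
    ∀ P : Set (Tile d), IsPatch P → Metric.diam (psupp P) < R →
      (∃ T ∈ S.Omega, P ⊆ T) → ∃ P₀ ∈ Ps, ∃ x : Pt d, P = translateSet P₀ x

/-- (A3) `ω : Ω → Ω` is bijective. -/
def SubBijective : Prop := Set.BijOn S.subSet S.Omega S.Omega

/-- (A4) `ω` forces its border. -/
def ForcesBorder : Prop :=
  ∃ n : ℕ, ∀ p ∈ S.proto, ∀ T ∈ S.Omega, ∀ T' ∈ S.Omega, ∀ x x' : Pt d,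
    translateSet (S.omegan n p) x ⊆ T → translateSet (S.omegan n p) x' ⊆ T' →
    translateSet (tilesAt T ((fun y => y + x) '' psupp (S.omegan n p))) (-x) =
      translateSet (tilesAt T' ((fun y => y + x') '' psupp (S.omegan n p))) (-x')

/-- Prototile boundaries have box-counting dimension strictly less than `d`. -/
def SmallBoundary : Prop :=
  ∃ c : ℝ, c < d ∧ ∃ K₀ : ℝ, ∀ p ∈ S.proto, ∀ ε : ℝ, 0 < ε →
    ∃ centers : Finset (Pt d), (centers.card : ℝ) ≤ K₀ * ε ^ (-c) ∧
      frontier p.carrier ⊆ ⋃ z ∈ centers, ball z ε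

end SubstSystem

/-- A symmetry group action for `(𝒫, ω)`: `G ≤ O(d, ℝ)` acting on tiles, preserving
the prototile set and commuting with the substitution. -/
structure SymmAction {d : ℕ} (S : SubstSystem d) (G : Subgroup (Pt d ≃ₗᵢ[ℝ] Pt d)) where
  act : G → Tile d → Tile d
  act_carrier : ∀ (g : G) (t : Tile d),
    (act g t).carrier = (g : Pt d ≃ₗᵢ[ℝ] Pt d) '' t.carrier
  act_one : ∀ t : Tile d, act 1 t = t
  act_mul : ∀ (g h : G) (t : Tile d), act (g * h) t = act g (act h t)
  act_proto : ∀ (g : G), ∀ p ∈ S.proto, act g p ∈ S.proto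
  act_translate : ∀ (g : G) (t : Tile d) (x : Pt d),
    act g (t.translate x) = (act g t).translate ((g : Pt d ≃ₗᵢ[ℝ] Pt d) x)
  act_sub : ∀ (g : G), ∀ p ∈ S.proto, S.sub (act g p) = act g '' S.sub p

/-- Action of a group element on a (partial) tiling: `gT = {gt : t ∈ T}`. -/
def SymmAction.actSet {d : ℕ} {S : SubstSystem d} {G : Subgroup (Pt d ≃ₗᵢ[ℝ] Pt d)}
    (σ : SymmAction S G) (g : G) (T : Set (Tile d)) : Set (Tile d) := σ.act g '' T

/-- `G` acts freely on the prototile set. -/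
def SymmAction.FreeOnProto {d : ℕ} {S : SubstSystem d} {G : Subgroup (Pt d ≃ₗᵢ[ℝ] Pt d)}
    (σ : SymmAction S G) : Prop := ∀ g : G, ∀ p ∈ S.proto, σ.act g p = p → g = 1

/-- Composition of relations. -/
def relComp {α : Type*} (R₁ R₂ : Set (α × α)) : Set (α × α) :=
  {q | ∃ z : α, (q.1, z) ∈ R₁ ∧ (z, q.2) ∈ R₂}

/-- Transpose (inverse) of a relation. -/
def relTrans {α : Type*} (R : Set (α × α)) : Set (α × α) := {q | (q.2, q.1) ∈ R}

end
section Aux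

variable {d : ℕ}

lemma tr_carrier (t : Tile d) (x : Pt d) :
    (t.translate x).carrier = (fun y => y + x) '' t.carrier := rfl

lemma tr_tr (t : Tile d) (a b : Pt d) :
    (t.translate a).translate b = t.translate (a + b) := by
  unfold Tile.translate
  simp only [Set.image_image]
  congr 1
  ext y
  simp [add_assoc]

lemma tr_zero (t : Tile d) : t.translate 0 = t := by
  unfold Tile.translate; simp

lemma tr_inj {t t' : Tile d} (x : Pt d) (h : t.translate x = t'.translate x) : t = t' := by
  have h1 : (t.translate x).translate (-x) = (t'.translate x).translate (-x) := by rw [h]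
  rwa [tr_tr, tr_tr, add_neg_cancel, tr_zero, tr_zero] at h1

lemma interior_tr (A : Set (Pt d)) (x : Pt d) :
    interior ((fun y => y + x) '' A) = (fun y => y + x) '' interior A :=
  ((Homeomorph.addRight x).image_interior A).symm

lemma closure_tr (A : Set (Pt d)) (x : Pt d) :
    closure ((fun y => y + x) '' A) = (fun y => y + x) '' closure A :=
  ((Homeomorph.addRight x).image_closure A).symm

lemma isTile_tr {t : Tile d} (ht : t.IsTile) (x : Pt d) : (t.translate x).IsTile := by
  obtain ⟨e⟩ := ht
  have h : (t.translate x).carrier = (Homeomorph.addRight x) '' t.carrier := rfl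
  exact ⟨(h ▸ ((Homeomorph.addRight x).image t.carrier).symm).trans e⟩

lemma smul_image_add (c : ℝ) (A : Set (Pt d)) (x : Pt d) :
    c • ((fun y => y + x) '' A) = (fun y => y + c • x) '' (c • A) := by
  ext z
  simp only [Set.mem_smul_set, Set.mem_image]
  constructor
  · rintro ⟨-, ⟨a, ha, rfl⟩, rfl⟩
    exact ⟨c • a, ⟨a, ha, rfl⟩, (smul_add c a x).symm⟩
  · rintro ⟨-, ⟨a, ha, rfl⟩, rfl⟩
    exact ⟨a + x, ⟨a, ha, rfl⟩, smul_add c a x⟩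

end Aux
section Aux2

variable {d : ℕ}

lemma psupp_singleton (t : Tile d) : psupp ({t} : Set (Tile d)) = t.carrier := by
  simp [psupp]

lemma psupp_iUnion {ι : Sort*} (Q : ι → Set (Tile d)) :
    psupp (⋃ i, Q i) = ⋃ i, psupp (Q i) := by
  ext z; simp only [psupp, Set.mem_iUnion]; aesop

lemma mem_psupp {P : Set (Tile d)} {z : Pt d} :
    z ∈ psupp P ↔ ∃ t ∈ P, z ∈ t.carrier := by
  simp [psupp]

lemma carrier_subset_psupp {P : Set (Tile d)} {t : Tile d} (ht : t ∈ P) :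
    t.carrier ⊆ psupp P := fun z hz => mem_psupp.2 ⟨t, ht, hz⟩

lemma psupp_translateSet (P : Set (Tile d)) (x : Pt d) :
    psupp (translateSet P x) = (fun y => y + x) '' psupp P := by
  ext z
  simp only [psupp, translateSet, Set.mem_iUnion, Set.mem_image, tr_carrier]
  constructor
  · rintro ⟨s, ⟨t, ht, rfl⟩, hz⟩
    obtain ⟨y, hy, rfl⟩ := hz
    exact ⟨y, ⟨t, ht, hy⟩, rfl⟩
  · rintro ⟨y, ⟨t, ht, hy⟩, rfl⟩
    exact ⟨t.translate x, ⟨t, ht, rfl⟩, ⟨y, hy, rfl⟩⟩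

variable (S : SubstSystem d)

lemma lam_pos : (0 : ℝ) < S.lam := lt_trans one_pos S.one_lt_lam

lemma lam_ne : S.lam ≠ 0 := ne_of_gt (lam_pos S)

lemma lam_pow_pos (n : ℕ) : (0 : ℝ) < S.lam ^ n := pow_pos (lam_pos S) n

lemma lam_pow_ne (n : ℕ) : S.lam ^ n ≠ 0 := ne_of_gt (lam_pow_pos S n)

lemma subSet_singleton (t : Tile d) : S.subSet {t} = S.sub t := by
  simp [SubstSystem.subSet]

lemma subSet_iUnion {ι : Sort*} (Q : ι → Set (Tile d)) :
    S.subSet (⋃ i, Q i) = ⋃ i, S.subSet (Q i) := by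
  ext s; simp only [SubstSystem.subSet, Set.mem_iUnion]; aesop

lemma subSet_mono {P Q : Set (Tile d)} (h : P ⊆ Q) : S.subSet P ⊆ S.subSet Q := by
  intro s hs
  simp only [SubstSystem.subSet, Set.mem_iUnion] at hs ⊢
  obtain ⟨t, ht, hst⟩ := hs
  exact ⟨t, h ht, hst⟩

lemma subSet_eq_biUnion (P : Set (Tile d)) : S.subSet P = ⋃ t ∈ P, S.sub t := rfl

lemma subIter_zero (P : Set (Tile d)) : S.subIter 0 P = P := rfl

lemma subIter_succ' (n : ℕ) (P : Set (Tile d)) :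
    S.subIter (n + 1) P = S.subSet (S.subIter n P) := Function.iterate_succ_apply' _ n P

lemma subIter_add (m n : ℕ) (P : Set (Tile d)) :
    S.subIter (m + n) P = S.subIter m (S.subIter n P) := Function.iterate_add_apply _ m n P

lemma subIter_mono (n : ℕ) {P Q : Set (Tile d)} (h : P ⊆ Q) :
    S.subIter n P ⊆ S.subIter n Q := by
  induction n with
  | zero => exact h
  | succ n ih => rw [subIter_succ', subIter_succ']; exact subSet_mono S ih

lemma subIter_iUnion (n : ℕ) {ι : Sort*} (Q : ι → Set (Tile d)) :
    S.subIter n (⋃ i, Q i) = ⋃ i, S.subIter n (Q i) := by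
  induction n with
  | zero => rfl
  | succ n ih => rw [subIter_succ', ih, subSet_iUnion]; simp only [subIter_succ']

lemma omegan_zero (t : Tile d) : S.omegan 0 t = {t} := rfl

lemma subSet_translateSet (P : Set (Tile d)) (x : Pt d) :
    S.subSet (translateSet P x) = translateSet (S.subSet P) (S.lam • x) := by
  ext s
  simp only [SubstSystem.subSet, translateSet, Set.mem_iUnion, Set.mem_image]
  constructor
  · rintro ⟨u, ⟨t, ht, rfl⟩, hs⟩
    rw [S.sub_translate t x] at hs
    obtain ⟨w, hw, rfl⟩ := hs
    exact ⟨w, ⟨t, ht, hw⟩, rfl⟩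
  · rintro ⟨w, ⟨t, ht, hw⟩, rfl⟩
    refine ⟨t.translate x, ⟨t, ht, rfl⟩, ?_⟩
    rw [S.sub_translate t x]
    exact ⟨w, hw, rfl⟩

lemma subIter_translateSet (n : ℕ) (P : Set (Tile d)) (x : Pt d) :
    S.subIter n (translateSet P x) = translateSet (S.subIter n P) (S.lam ^ n • x) := by
  induction n with
  | zero => simp [subIter_zero]
  | succ n ih =>
      rw [subIter_succ', ih, subSet_translateSet, subIter_succ', smul_smul, ← pow_succ']

lemma translateSet_singleton (t : Tile d) (x : Pt d) :
    translateSet ({t} : Set (Tile d)) x = {t.translate x} := by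
  simp [translateSet]

lemma omegan_translate (n : ℕ) (t : Tile d) (x : Pt d) :
    S.omegan n (t.translate x) = translateSet (S.omegan n t) (S.lam ^ n • x) := by
  rw [SubstSystem.omegan, SubstSystem.omegan, ← translateSet_singleton, subIter_translateSet]

end Aux2
section Aux3

variable {d : ℕ}

/-- `t` is a translate of a prototile. -/
def ProtoT (S : SubstSystem d) (t : Tile d) : Prop :=
  ∃ q ∈ S.proto, ∃ w : Pt d, t = q.translate w

variable (S : SubstSystem d)

lemma protoT_of_mem {p : Tile d} (hp : p ∈ S.proto) : ProtoT S p :=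
  ⟨p, hp, 0, (tr_zero p).symm⟩

lemma protoT_tr {t : Tile d} (ht : ProtoT S t) (x : Pt d) : ProtoT S (t.translate x) := by
  obtain ⟨q, hq, w, rfl⟩ := ht
  exact ⟨q, hq, w + x, tr_tr q w x⟩

lemma protoT_isTile {t : Tile d} (ht : ProtoT S t) : t.IsTile := by
  obtain ⟨q, hq, w, rfl⟩ := ht
  exact isTile_tr (S.proto_isTile q hq) w

lemma isTile_compact {t : Tile d} (ht : t.IsTile) : IsCompact t.carrier := by
  obtain ⟨e⟩ := ht
  have : CompactSpace (Metric.closedBall (0 : Pt d) 1) :=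
    isCompact_iff_compactSpace.1 (isCompact_closedBall _ _)
  have : CompactSpace t.carrier := e.symm.compactSpace
  exact isCompact_iff_compactSpace.2 this

lemma protoT_interior_nonempty {t : Tile d} (ht : ProtoT S t) :
    (interior t.carrier).Nonempty := by
  obtain ⟨q, hq, w, rfl⟩ := ht
  rw [tr_carrier, interior_tr]
  exact ⟨w, 0, S.proto_zero_mem q hq, zero_add w⟩

lemma protoT_zero_mem_interior {q : Tile d} (hq : q ∈ S.proto) (w : Pt d) :
    w ∈ interior (q.translate w).carrier := by
  rw [tr_carrier, interior_tr]
  exact ⟨0, S.proto_zero_mem q hq, zero_add w⟩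

lemma exists_diam_bound : ∃ D : ℝ, 0 ≤ D ∧
    ∀ t : Tile d, ProtoT S t → Metric.diam t.carrier ≤ D := by
  have hfin : ((fun p => Metric.diam p.carrier) '' S.proto).Finite :=
    S.proto_finite.image _
  obtain ⟨D, hD⟩ := hfin.bddAbove
  refine ⟨max D 0, le_max_right _ _, ?_⟩
  rintro t ⟨q, hq, w, rfl⟩
  rw [tr_carrier, (isometry_add_right w).diam_image]
  exact le_max_of_le_left (hD ⟨q, hq, rfl⟩)

lemma protoT_compact {t : Tile d} (ht : ProtoT S t) : IsCompact t.carrier :=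
  isTile_compact (protoT_isTile S ht)

/-- Properties of the substitution of a single prototile translate. -/
lemma sub_spec {t : Tile d} (ht : ProtoT S t) :
    (∀ s ∈ S.sub t, ProtoT S s) ∧
    psupp (S.sub t) = S.lam • t.carrier ∧
    (∀ s ∈ S.sub t, ∀ s' ∈ S.sub t, s ≠ s' →
      interior s.carrier ∩ interior s'.carrier = ∅) ∧
    (S.sub t).Finite := by
  obtain ⟨q, hq, w, rfl⟩ := ht
  have hsub : S.sub (q.translate w) = (fun s => s.translate (S.lam • w)) '' S.sub q :=
    S.sub_translate q w
  refine ⟨?_, ?_, ?_, ?_⟩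
  · rintro s hs
    rw [hsub] at hs
    obtain ⟨u, hu, rfl⟩ := hs
    obtain ⟨q', hq', y, rfl⟩ := S.sub_proto q hq u hu
    exact ⟨q', hq', y + S.lam • w, tr_tr q' y (S.lam • w)⟩
  · have : S.sub (q.translate w) = translateSet (S.sub q) (S.lam • w) := hsub
    rw [this, psupp_translateSet, S.sub_supp q hq, tr_carrier, smul_image_add]
  · rintro s hs s' hs' hne
    rw [hsub] at hs hs'
    obtain ⟨u, hu, rfl⟩ := hs
    obtain ⟨u', hu', rfl⟩ := hs'
    have hune : u ≠ u' := fun h => hne (by rw [h])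
    have hdisj := (S.sub_patch q hq).1.2 u hu u' hu' hune
    rw [tr_carrier, tr_carrier, interior_tr, interior_tr]
    rw [← Set.image_inter (fun a b => by simp), hdisj, Set.image_empty]
  · rw [hsub]; exact ((S.sub_patch q hq).2).image _

lemma interior_subset_interior_psupp {P : Set (Tile d)} {t : Tile d} (ht : t ∈ P) :
    interior t.carrier ⊆ interior (psupp P) :=
  interior_mono (carrier_subset_psupp ht)

/-- Properties of one substitution step on a set of prototile translates. -/
lemma subSet_spec {P : Set (Tile d)} (h1 : ∀ t ∈ P, ProtoT S t)
    (h2 : ∀ t ∈ P, ∀ t' ∈ P, t ≠ t' → interior t.carrier ∩ interior t'.carrier = ∅) :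
    (∀ s ∈ S.subSet P, ProtoT S s) ∧
    psupp (S.subSet P) = S.lam • psupp P ∧
    (∀ s ∈ S.subSet P, ∀ s' ∈ S.subSet P, s ≠ s' →
      interior s.carrier ∩ interior s'.carrier = ∅) := by
  refine ⟨?_, ?_, ?_⟩
  · rintro s hs
    simp only [SubstSystem.subSet, Set.mem_iUnion] at hs
    obtain ⟨t, ht, hst⟩ := hs
    exact (sub_spec S (h1 t ht)).1 s hst
  · ext z
    simp only [Set.mem_smul_set]
    constructor
    · intro hz
      obtain ⟨s, hs, hzs⟩ := mem_psupp.1 hz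
      simp only [SubstSystem.subSet, Set.mem_iUnion] at hs
      obtain ⟨t, ht, hst⟩ := hs
      have : z ∈ psupp (S.sub t) := mem_psupp.2 ⟨s, hst, hzs⟩
      rw [(sub_spec S (h1 t ht)).2.1] at this
      obtain ⟨y, hy, rfl⟩ := this
      exact ⟨y, carrier_subset_psupp ht hy, rfl⟩
    · rintro ⟨y, hy, rfl⟩
      obtain ⟨t, ht, hyt⟩ := mem_psupp.1 hy
      have : S.lam • y ∈ psupp (S.sub t) := by
        rw [(sub_spec S (h1 t ht)).2.1]; exact ⟨y, hyt, rfl⟩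
      obtain ⟨s, hs, hzs⟩ := mem_psupp.1 this
      exact mem_psupp.2 ⟨s, Set.mem_biUnion ht hs, hzs⟩
  · rintro s hs s' hs' hne
    simp only [SubstSystem.subSet, Set.mem_iUnion] at hs hs'
    obtain ⟨t, ht, hst⟩ := hs
    obtain ⟨t', ht', hst'⟩ := hs'
    by_cases htt : t = t'
    · subst htt
      exact (sub_spec S (h1 t ht)).2.2.1 s hst s' hst' hne
    · have hI : interior s.carrier ⊆ S.lam • interior t.carrier := by
        have h1' : interior s.carrier ⊆ interior (psupp (S.sub t)) :=
          interior_subset_interior_psupp hst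
        rwa [(sub_spec S (h1 t ht)).2.1, interior_smul₀ (lam_ne S)] at h1'
      have hI' : interior s'.carrier ⊆ S.lam • interior t'.carrier := by
        have h1' : interior s'.carrier ⊆ interior (psupp (S.sub t')) :=
          interior_subset_interior_psupp hst'
        rwa [(sub_spec S (h1 t' ht')).2.1, interior_smul₀ (lam_ne S)] at h1'
      have : S.lam • interior t.carrier ∩ S.lam • interior t'.carrier = ∅ := by
        rw [← Set.smul_set_inter₀ (lam_ne S), h2 t ht t' ht' htt, Set.smul_set_empty]
      exact Set.eq_empty_of_subset_empty
        (this ▸ Set.inter_subset_inter hI hI')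

lemma subSet_finite {P : Set (Tile d)} (h1 : ∀ t ∈ P, ProtoT S t) (hP : P.Finite) :
    (S.subSet P).Finite :=
  hP.biUnion fun t ht => (sub_spec S (h1 t ht)).2.2.2

/-- Main structural properties of `ω^m(t)` for `t` a prototile translate. -/
lemma omegan_spec (m : ℕ) {t : Tile d} (ht : ProtoT S t) :
    (∀ s ∈ S.omegan m t, ProtoT S s) ∧
    psupp (S.omegan m t) = (S.lam ^ m) • t.carrier ∧
    (∀ s ∈ S.omegan m t, ∀ s' ∈ S.omegan m t, s ≠ s' →
      interior s.carrier ∩ interior s'.carrier = ∅) ∧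
    (S.omegan m t).Finite := by
  induction m with
  | zero =>
      refine ⟨?_, ?_, ?_, ?_⟩
      · rintro s hs; rw [omegan_zero, Set.mem_singleton_iff] at hs; subst hs; exact ht
      · rw [omegan_zero, psupp_singleton, pow_zero, one_smul]
      · rintro s hs s' hs' hne
        rw [omegan_zero, Set.mem_singleton_iff] at hs hs'
        exact absurd (hs.trans hs'.symm) hne
      · rw [omegan_zero]; exact Set.finite_singleton t
  | succ m ih =>
      have hstep : S.omegan (m + 1) t = S.subSet (S.omegan m t) := subIter_succ' S m {t}
      obtain ⟨ih1, ih2, ih3, ih4⟩ := ih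
      obtain ⟨a1, a2, a3⟩ := subSet_spec S ih1 ih3
      refine ⟨?_, ?_, ?_, ?_⟩
      · rw [hstep]; exact a1
      · rw [hstep, a2, ih2, smul_smul, ← pow_succ']
      · rw [hstep]; exact a3
      · rw [hstep]; exact subSet_finite S ih1 ih4

end Aux3
section Aux4

variable {d : ℕ} (S : SubstSystem d)

/-- Regularity: prototile translates are the closure of their interior. -/
lemma protoT_regular {t : Tile d} (ht : ProtoT S t) :
    t.carrier ⊆ closure (interior t.carrier) := by
  intro z hz
  by_contra hcz
  obtain ⟨D, hD0, hD⟩ := exists_diam_bound S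
  set A := interior t.carrier with hA
  have hAne : A.Nonempty := protoT_interior_nonempty S ht
  have hδ : 0 < Metric.infDist z A := by
    rw [← Metric.infDist_closure]
    exact (isClosed_closure.notMem_iff_infDist_pos hAne.closure).1 hcz
  set δ := Metric.infDist z A with hδdef
  obtain ⟨k, hk⟩ := pow_unbounded_of_one_lt (D / δ) S.one_lt_lam
  have hk' : D < S.lam ^ k * δ := by
    rw [div_lt_iff₀ hδ] at hk; linarith
  have hzk : (S.lam ^ k) • z ∈ psupp (S.omegan k t) := by
    rw [(omegan_spec S k ht).2.1]; exact ⟨z, hz, rfl⟩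
  obtain ⟨s, hs, hzs⟩ := mem_psupp.1 hzk
  have hsP : ProtoT S s := (omegan_spec S k ht).1 s hs
  obtain ⟨u, hu⟩ : (interior s.carrier).Nonempty := protoT_interior_nonempty S hsP
  have husup : u ∈ (S.lam ^ k) • A := by
    have h1 : interior s.carrier ⊆ interior (psupp (S.omegan k t)) :=
      interior_subset_interior_psupp hs
    have h2 := h1 hu
    rwa [(omegan_spec S k ht).2.1, interior_smul₀ (lam_pow_ne S k)] at h2
  obtain ⟨v, hv, rfl⟩ := husup
  have hdist1 : S.lam ^ k * δ ≤ dist ((S.lam ^ k) • z) ((S.lam ^ k) • v) := by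
    rw [dist_smul₀, Real.norm_eq_abs, abs_of_pos (lam_pow_pos S k)]
    exact mul_le_mul_of_nonneg_left (Metric.infDist_le_dist_of_mem hv)
      (le_of_lt (lam_pow_pos S k))
  have hdist2 : dist ((S.lam ^ k) • z) ((S.lam ^ k) • v) ≤ D := by
    have hb : Bornology.IsBounded s.carrier := (protoT_compact S hsP).isBounded
    exact le_trans (Metric.dist_le_diam_of_mem hb hzs (interior_subset hu)) (hD s hsP)
  linarith

lemma psupp_mono {P Q : Set (Tile d)} (h : P ⊆ Q) : psupp P ⊆ psupp Q := by
  intro z hz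
  obtain ⟨t, ht, hzt⟩ := mem_psupp.1 hz
  exact mem_psupp.2 ⟨t, h ht, hzt⟩

lemma omegan_chain {t : Tile d} {n : ℕ} (h : t ∈ S.omegan n t) (k : ℕ) :
    S.omegan (k * n) t ⊆ S.omegan ((k + 1) * n) t := by
  have h1 : ({t} : Set (Tile d)) ⊆ S.omegan n t := Set.singleton_subset_iff.2 h
  have h2 : S.omegan ((k + 1) * n) t = S.subIter (k * n) (S.omegan n t) := by
    rw [SubstSystem.omegan, SubstSystem.omegan, ← subIter_add]
    congr 1; ring
  rw [h2]
  exact subIter_mono S _ h1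

lemma omegan_mono_k {t : Tile d} {n : ℕ} (h : t ∈ S.omegan n t) {k k' : ℕ} (hkk : k ≤ k') :
    S.omegan (k * n) t ⊆ S.omegan (k' * n) t := by
  induction k', hkk using Nat.le_induction with
  | base => exact subset_rfl
  | succ k' hkk ih => exact ih.trans (omegan_chain S h k')

lemma mem_omegan_self {t : Tile d} {n : ℕ} (h : t ∈ S.omegan n t) (k : ℕ) :
    t ∈ S.omegan (k * n) t := by
  have h0 : t ∈ S.omegan (0 * n) t := by
    rw [Nat.zero_mul]; exact rfl
  exact omegan_mono_k S h (Nat.zero_le k) h0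

lemma subIter_biUnion (n : ℕ) (P : Set (Tile d)) :
    S.subIter n P = ⋃ u ∈ P, S.omegan n u := by
  conv_lhs => rw [← Set.biUnion_of_singleton P]
  simp only [Set.biUnion_eq_iUnion]
  rw [subIter_iUnion]
  rfl

/-- Base case: the only tile of `ω^n(t)` containing `0` is `t` itself. -/
lemma unique_at_zero_base {t : Tile d} (ht : ProtoT S t) {n : ℕ}
    (h0 : (0 : Pt d) ∈ interior t.carrier) (htt : t ∈ S.omegan n t)
    {s : Tile d} (hs : s ∈ S.omegan n t) (h0s : (0 : Pt d) ∈ s.carrier) : s = t := by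
  by_contra hne
  have hdisj := (omegan_spec S n ht).2.2.1 s hs t htt hne
  have hsP : ProtoT S s := (omegan_spec S n ht).1 s hs
  have h0cl : (0 : Pt d) ∈ closure (interior s.carrier) := protoT_regular S hsP h0s
  obtain ⟨w, hw1, hw2⟩ := mem_closure_iff.1 h0cl (interior t.carrier) isOpen_interior h0
  exact Set.eq_empty_iff_forall_notMem.1 hdisj w ⟨hw2, hw1⟩

lemma unique_at_zero {t : Tile d} (ht : ProtoT S t) {n : ℕ}
    (h0 : (0 : Pt d) ∈ interior t.carrier) (htt : t ∈ S.omegan n t) (k : ℕ) :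
    ∀ s ∈ S.omegan (k * n) t, (0 : Pt d) ∈ s.carrier → s = t := by
  induction k with
  | zero =>
      intro s hs _
      rw [Nat.zero_mul] at hs
      exact hs
  | succ k ih =>
      intro s hs h0s
      have harith : (k + 1) * n = n + k * n := by ring
      have hdecomp : S.omegan ((k + 1) * n) t = ⋃ u ∈ S.omegan (k * n) t, S.omegan n u := by
        rw [SubstSystem.omegan, harith, subIter_add, ← subIter_biUnion]
        rfl
      rw [hdecomp] at hs
      obtain ⟨u, hu, hsu⟩ := Set.mem_iUnion₂.1 hs
      have huP : ProtoT S u := (omegan_spec S (k * n) ht).1 u hu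
      have hsupp : s.carrier ⊆ (S.lam ^ n) • u.carrier := by
        have := carrier_subset_psupp hsu
        rwa [(omegan_spec S n huP).2.1] at this
      have h0u : (0 : Pt d) ∈ u.carrier :=
        (Set.zero_mem_smul_set_iff (lam_pow_ne S n)).1 (hsupp h0s)
      have hut : u = t := ih u hu h0u
      subst hut
      exact unique_at_zero_base S ht h0 htt hsu h0s

end Aux4
section Aux5

variable {d : ℕ} (S : SubstSystem d)

lemma part1 (hA1 : S.Primitive) :
    ∃ n : ℕ, 1 ≤ n ∧ ∃ p ∈ S.proto, ∃ x : Pt d,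
      p.translate x ∈ S.omegan n p ∧
      (p.translate x).carrier ⊆ interior (psupp (S.omegan n p)) := by
  obtain ⟨N, hN⟩ := hA1
  obtain ⟨p, hp⟩ := S.proto_nonempty
  obtain ⟨ρ, hρ, hball⟩ := Metric.isOpen_iff.1 isOpen_interior 0 (S.proto_zero_mem p hp)
  obtain ⟨D, hD0, hD⟩ := exists_diam_bound S
  obtain ⟨m₀, hm₀⟩ := pow_unbounded_of_one_lt (D / ρ) S.one_lt_lam
  set m := m₀ + 1 with hm
  have hlm : D / ρ < S.lam ^ m := by
    calc D / ρ < S.lam ^ m₀ := hm₀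
    _ < S.lam ^ m := by
        rw [hm, pow_succ]
        nlinarith [lam_pow_pos S m₀, S.one_lt_lam]
  have hDm : D < S.lam ^ m * ρ := by
    rw [div_lt_iff₀ hρ] at hlm; linarith
  set n := N + m with hn
  have hn1 : 1 ≤ n := by omega
  -- find a tile of ω^m(p) containing 0
  have h0p : (0 : Pt d) ∈ p.carrier := interior_subset (S.proto_zero_mem p hp)
  have h0supp : (0 : Pt d) ∈ psupp (S.omegan m p) := by
    rw [(omegan_spec S m (protoT_of_mem S hp)).2.1]
    exact ⟨0, h0p, smul_zero _⟩
  obtain ⟨s, hs, h0s⟩ := mem_psupp.1 h0supp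
  have hsP : ProtoT S s := (omegan_spec S m (protoT_of_mem S hp)).1 s hs
  obtain ⟨q, hq, y, rfl⟩ := hsP
  obtain ⟨z, hz⟩ := hN q hq p hp
  refine ⟨n, hn1, p, hp, z + S.lam ^ N • y, ?_, ?_⟩
  · -- membership
    have h1 : p.translate (z + S.lam ^ N • y) ∈ S.omegan N (q.translate y) := by
      rw [omegan_translate]
      exact ⟨p.translate z, hz, tr_tr p z (S.lam ^ N • y)⟩
    have h2 : S.omegan N (q.translate y) ⊆ S.omegan n p := by
      have he : S.omegan n p = S.subIter N (S.omegan m p) := by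
        rw [hn, SubstSystem.omegan, subIter_add]
        rfl
      rw [he]
      exact subIter_mono S N (Set.singleton_subset_iff.2 hs)
    exact h2 h1
  · -- interior containment
    have hsub1 : (p.translate (z + S.lam ^ N • y)).carrier ⊆
        (S.lam ^ N) • (q.translate y).carrier := by
      have h1 : p.translate (z + S.lam ^ N • y) ∈ S.omegan N (q.translate y) := by
        rw [omegan_translate]
        exact ⟨p.translate z, hz, tr_tr p z (S.lam ^ N • y)⟩
      have h2 := carrier_subset_psupp h1
      rwa [(omegan_spec S N ⟨q, hq, y, rfl⟩).2.1] at h2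
    intro w hw
    obtain ⟨v, hv, rfl⟩ := hsub1 hw
    -- ‖v‖ ≤ D since 0 ∈ s and diam s ≤ D
    have hvD : ‖v‖ ≤ D := by
      have hb : Bornology.IsBounded (q.translate y).carrier :=
        (protoT_compact S ⟨q, hq, y, rfl⟩).isBounded
      have := Metric.dist_le_diam_of_mem hb hv h0s
      rw [dist_zero_right] at this
      exact le_trans this (hD _ ⟨q, hq, y, rfl⟩)
    have hnorm : ‖(S.lam ^ N) • v‖ < S.lam ^ n * ρ := by
      rw [norm_smul, Real.norm_eq_abs, abs_of_pos (lam_pow_pos S N)]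
      calc S.lam ^ N * ‖v‖ ≤ S.lam ^ N * D :=
            mul_le_mul_of_nonneg_left hvD (le_of_lt (lam_pow_pos S N))
      _ < S.lam ^ N * (S.lam ^ m * ρ) :=
            mul_lt_mul_of_pos_left hDm (lam_pow_pos S N)
      _ = S.lam ^ n * ρ := by rw [hn, pow_add]; ring
    -- conclude
    have hball' : (S.lam ^ N) • v ∈ (S.lam ^ n) • Metric.ball (0 : Pt d) ρ := by
      rw [_root_.smul_ball (lam_pow_ne S n), smul_zero]
      rw [Metric.mem_ball, dist_zero_right, Real.norm_eq_abs, abs_of_pos (lam_pow_pos S n)]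
      exact hnorm
    have : (S.lam ^ N) • v ∈ (S.lam ^ n) • interior p.carrier :=
      Set.smul_set_mono hball hball'
    rw [← interior_smul₀ (lam_pow_ne S n), ← (omegan_spec S n (protoT_of_mem S hp)).2.1] at this
    exact this

end Aux5
section Aux6

variable {d : ℕ} (S : SubstSystem d)

lemma part2 (n : ℕ) (hn : 1 ≤ n) (p : Tile d) (hp : p ∈ S.proto) (x : Pt d)
    (hmem : p.translate x ∈ S.omegan n p)
    (hint : (p.translate x).carrier ⊆ interior (psupp (S.omegan n p))) :
    (∀ y ∈ psupp (S.omegan n p), (S.lam ^ n)⁻¹ • y + x ∈ psupp (S.omegan n p)) ∧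
    (∃! y₀ : Pt d, (S.lam ^ n)⁻¹ • y₀ + x = y₀) ∧
    (∀ y₀ : Pt d, (S.lam ^ n)⁻¹ • y₀ + x = y₀ →
      p.translate (x - y₀) ∈ S.omegan n (p.translate (x - y₀)) ∧
      (0 : Pt d) ∈ interior (p.translate (x - y₀)).carrier ∧
      (⋃ k : ℕ, S.omegan (k * n) (p.translate (x - y₀))) ∈ S.Omega ∧
      S.subIter n (⋃ k : ℕ, S.omegan (k * n) (p.translate (x - y₀))) =
        ⋃ k : ℕ, S.omegan (k * n) (p.translate (x - y₀)) ∧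
      {t' ∈ ⋃ k : ℕ, S.omegan (k * n) (p.translate (x - y₀)) |
         (0 : Pt d) ∈ t'.carrier} = {p.translate (x - y₀)}) := by
  have hL1 : 1 < S.lam ^ n := one_lt_pow₀ S.one_lt_lam (by omega)
  have hL0 := lam_pow_ne S n
  have hc0 : (0 : ℝ) < (S.lam ^ n)⁻¹ := inv_pos.2 (lam_pow_pos S n)
  have hc1 : (S.lam ^ n)⁻¹ < 1 := inv_lt_one_of_one_lt₀ hL1
  have h1c : (1 : ℝ) - (S.lam ^ n)⁻¹ ≠ 0 := by linarith
  have h0p : (0 : Pt d) ∈ p.carrier := interior_subset (S.proto_zero_mem p hp)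
  have hsupp : psupp (S.omegan n p) = S.lam ^ n • p.carrier :=
    (omegan_spec S n (protoT_of_mem S hp)).2.1
  refine ⟨?_, ?_, ?_⟩
  · -- (a) the contraction maps the support into itself
    intro y hy
    rw [hsupp] at hy ⊢
    obtain ⟨u, hu, rfl⟩ := hy
    rw [inv_smul_smul₀ hL0]
    have h1 : u + x ∈ (p.translate x).carrier := ⟨u, hu, rfl⟩
    have h2 := interior_subset (hint h1)
    rwa [hsupp] at h2
  · -- (b) unique fixed point
    refine ⟨((1 : ℝ) - (S.lam ^ n)⁻¹)⁻¹ • x, ?_, ?_⟩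
    · show (S.lam ^ n)⁻¹ • (((1 : ℝ) - (S.lam ^ n)⁻¹)⁻¹ • x) + x =
        ((1 : ℝ) - (S.lam ^ n)⁻¹)⁻¹ • x
      rw [smul_smul]
      have he : (S.lam ^ n)⁻¹ * ((1 : ℝ) - (S.lam ^ n)⁻¹)⁻¹ =
          ((1 : ℝ) - (S.lam ^ n)⁻¹)⁻¹ - 1 := by
        have hL1' : S.lam ^ n - 1 ≠ 0 := ne_of_gt (by linarith)
        field_simp
        ring
      rw [he, sub_smul, one_smul]
      abel
    · intro y hy
      have h2 : x = y - (S.lam ^ n)⁻¹ • y := by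
        rw [eq_sub_iff_add_eq, add_comm]; exact hy
      have h3 : ((1 : ℝ) - (S.lam ^ n)⁻¹) • y = x := by
        rw [sub_smul, one_smul]; exact h2.symm
      rw [← h3, smul_smul, inv_mul_cancel₀ h1c, one_smul]
  · -- (c)
    intro y₀ hy₀
    have ht₀P : ProtoT S (p.translate (x - y₀)) := ⟨p, hp, x - y₀, rfl⟩
    have h1 := congrArg (fun z : Pt d => (S.lam ^ n) • z) hy₀
    simp only [smul_add, smul_inv_smul₀ hL0] at h1
    -- h1 : y₀ + S.lam ^ n • x = S.lam ^ n • y₀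
    have hkey : S.lam ^ n • (x - y₀) = -y₀ := by
      rw [smul_sub, ← h1]; abel
    have hc1mem : p.translate (x - y₀) ∈ S.omegan n (p.translate (x - y₀)) := by
      rw [omegan_translate, hkey]
      exact ⟨p.translate x, hmem, by
        show (p.translate x).translate (-y₀) = p.translate (x - y₀)
        rw [tr_tr, ← sub_eq_add_neg]⟩
    have hLsmul : S.lam ^ n • (p.translate (x - y₀)).carrier =
        (fun y => y + -y₀) '' (S.lam ^ n • p.carrier) := by
      rw [tr_carrier, smul_image_add, hkey]
    have hsub : (p.translate (x - y₀)).carrier ⊆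
        interior (S.lam ^ n • (p.translate (x - y₀)).carrier) := by
      rw [hLsmul, interior_tr]
      rintro w ⟨u, hu, rfl⟩
      refine ⟨u + x, ?_, ?_⟩
      · have hux : u + x ∈ (p.translate x).carrier := ⟨u, hu, rfl⟩
        have h2 := hint hux
        rwa [hsupp] at h2
      · show (u + x) + -y₀ = u + (x - y₀)
        abel
    have hcontract : (S.lam ^ n)⁻¹ • (p.translate (x - y₀)).carrier ⊆
        interior (p.translate (x - y₀)).carrier := by
      have h2 := Set.smul_set_mono (a := (S.lam ^ n)⁻¹) hsub
      rwa [← interior_smul₀ (inv_ne_zero hL0), smul_smul, inv_mul_cancel₀ hL0, one_smul] at h2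
    have hseq : ∀ j : ℕ, ((S.lam ^ n)⁻¹) ^ j • (0 + (x - y₀)) ∈ (p.translate (x - y₀)).carrier := by
      intro j
      induction j with
      | zero => rw [pow_zero, one_smul]; exact ⟨0, h0p, rfl⟩
      | succ j ih =>
          rw [pow_succ, mul_comm, ← smul_smul]
          exact interior_subset (hcontract ⟨_, ih, rfl⟩)
    have hclosed : IsClosed (p.translate (x - y₀)).carrier := (protoT_compact S ht₀P).isClosed
    have h0mem : (0 : Pt d) ∈ (p.translate (x - y₀)).carrier := by
      have hlim : Filter.Tendsto (fun j : ℕ => ((S.lam ^ n)⁻¹) ^ j • (0 + (x - y₀)))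
          Filter.atTop (nhds 0) := by
        have hp1 : Filter.Tendsto (fun j : ℕ => ((S.lam ^ n)⁻¹) ^ j) Filter.atTop (nhds 0) :=
          tendsto_pow_atTop_nhds_zero_of_lt_one (le_of_lt hc0) hc1
        have hp2 := hp1.smul_const ((0 : Pt d) + (x - y₀))
        rwa [zero_smul] at hp2
      exact hclosed.mem_of_tendsto hlim (Filter.Eventually.of_forall hseq)
    have h0int : (0 : Pt d) ∈ interior (p.translate (x - y₀)).carrier :=
      hcontract ⟨0, h0mem, smul_zero _⟩
    -- the tiling T
    have hmemT : ∀ s ∈ ⋃ k : ℕ, S.omegan (k * n) (p.translate (x - y₀)),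
        ∃ k, s ∈ S.omegan (k * n) (p.translate (x - y₀)) := fun s hs => Set.mem_iUnion.1 hs
    have ht₀T : p.translate (x - y₀) ∈ ⋃ k : ℕ, S.omegan (k * n) (p.translate (x - y₀)) :=
      Set.mem_iUnion.2 ⟨0, by rw [Nat.zero_mul]; exact rfl⟩
    have hPT : IsPartialTiling (⋃ k : ℕ, S.omegan (k * n) (p.translate (x - y₀))) := by
      constructor
      · intro s hs
        obtain ⟨k, hk⟩ := hmemT s hs
        exact protoT_isTile S ((omegan_spec S (k * n) ht₀P).1 s hk)
      · intro s hs s' hs' hne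
        obtain ⟨k, hk⟩ := hmemT s hs
        obtain ⟨k', hk'⟩ := hmemT s' hs'
        have hkk : s ∈ S.omegan (max k k' * n) (p.translate (x - y₀)) :=
          omegan_mono_k S hc1mem (le_max_left k k') hk
        have hkk' : s' ∈ S.omegan (max k k' * n) (p.translate (x - y₀)) :=
          omegan_mono_k S hc1mem (le_max_right k k') hk'
        exact (omegan_spec S (max k k' * n) ht₀P).2.2.1 s hkk s' hkk' hne
    have hcover : psupp (⋃ k : ℕ, S.omegan (k * n) (p.translate (x - y₀))) = Set.univ := by
      rw [psupp_iUnion]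
      apply Set.eq_univ_of_forall
      intro z
      obtain ⟨ρ₀, hρ₀, hball₀⟩ := Metric.isOpen_iff.1 isOpen_interior 0 h0int
      obtain ⟨k, hk⟩ := pow_unbounded_of_one_lt (‖z‖ / ρ₀) hL1
      have hkpow : ‖z‖ < S.lam ^ (k * n) * ρ₀ := by
        have hpm : (S.lam ^ n) ^ k = S.lam ^ (k * n) := by rw [← pow_mul, mul_comm]
        rw [div_lt_iff₀ hρ₀] at hk
        calc ‖z‖ < (S.lam ^ n) ^ k * ρ₀ := hk
        _ = _ := by rw [hpm]
      refine Set.mem_iUnion.2 ⟨k, ?_⟩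
      rw [(omegan_spec S (k * n) ht₀P).2.1]
      refine ⟨(S.lam ^ (k * n))⁻¹ • z, ?_, smul_inv_smul₀ (lam_pow_ne S (k * n)) z⟩
      apply interior_subset
      apply hball₀
      rw [Metric.mem_ball, dist_zero_right, norm_smul, Real.norm_eq_abs,
        abs_of_pos (inv_pos.2 (lam_pow_pos S (k * n)))]
      rw [inv_mul_lt_iff₀ (lam_pow_pos S (k * n))]
      exact hkpow
    have hOm : (⋃ k : ℕ, S.omegan (k * n) (p.translate (x - y₀))) ∈ S.Omega := by
      refine ⟨⟨hPT, hcover⟩, ?_⟩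
      intro P hPsub hPpatch
      have hex : ∀ s ∈ P, ∃ k : ℕ, s ∈ S.omegan (k * n) (p.translate (x - y₀)) :=
        fun s hs => hmemT s (hPsub hs)
      choose! f hf using hex
      obtain ⟨K, hK⟩ := (hPpatch.2.image f).bddAbove
      refine ⟨K * n, p, hp, S.lam ^ (K * n) • (x - y₀), ?_⟩
      intro s hs
      have h2 : s ∈ S.omegan (K * n) (p.translate (x - y₀)) :=
        omegan_mono_k S hc1mem (hK (Set.mem_image_of_mem f hs)) (hf s hs)
      rwa [omegan_translate] at h2
    have hfix : S.subIter n (⋃ k : ℕ, S.omegan (k * n) (p.translate (x - y₀))) =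
        ⋃ k : ℕ, S.omegan (k * n) (p.translate (x - y₀)) := by
      rw [subIter_iUnion]
      have he : ∀ k : ℕ, S.subIter n (S.omegan (k * n) (p.translate (x - y₀))) =
          S.omegan ((k + 1) * n) (p.translate (x - y₀)) := by
        intro k
        rw [SubstSystem.omegan, SubstSystem.omegan, ← subIter_add]
        congr 1
        ring
      apply Set.Subset.antisymm
      · refine Set.iUnion_subset fun k => ?_
        rw [he k]
        exact Set.subset_iUnion (fun k : ℕ => S.omegan (k * n) (p.translate (x - y₀))) (k + 1)
      · refine Set.iUnion_subset fun k => ?_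
        refine Set.Subset.trans (omegan_chain S hc1mem k) ?_
        rw [← he k]
        exact Set.subset_iUnion
          (fun k : ℕ => S.subIter n (S.omegan (k * n) (p.translate (x - y₀)))) k
    have huniq : {t' ∈ ⋃ k : ℕ, S.omegan (k * n) (p.translate (x - y₀)) |
        (0 : Pt d) ∈ t'.carrier} = {p.translate (x - y₀)} := by
      apply Set.Subset.antisymm
      · rintro s ⟨hsT, h0s⟩
        obtain ⟨k, hk⟩ := hmemT s hsT
        exact unique_at_zero S ht₀P h0int hc1mem k s hk h0s
      · rintro s hs
        rw [Set.mem_singleton_iff] at hs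
        subst hs
        exact ⟨ht₀T, h0mem⟩
    exact ⟨hc1mem, h0int, hOm, hfix, huniq⟩

end Aux6

/-- Primitivity yields `n ≥ 1`, `p ∈ 𝒫`, `x` with `p + x ∈ ω^n(p)`
inside the interior of `supp(ω^n(p))`; for any such data the contraction
`y ↦ λ^{-n}y + x` maps `supp(ω^n(p))` into itself with a unique fixed point `y₀`, and
`t = p + x − y₀` satisfies `t ∈ ω^n(t)`, contains `0` in its interior, and
`T = ∪_k ω^{kn}(t)` is a tiling in `Ω` with `ω^n(T) = T` whose unique tile containing
`0` is `t`. -/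
theorem stmt11 {d : ℕ} (hd : 1 ≤ d) (S : SubstSystem d) (hA1 : S.Primitive) :
    (∃ n : ℕ, 1 ≤ n ∧ ∃ p ∈ S.proto, ∃ x : Pt d,
      p.translate x ∈ S.omegan n p ∧
      (p.translate x).carrier ⊆ interior (psupp (S.omegan n p))) ∧
    (∀ n : ℕ, 1 ≤ n → ∀ p ∈ S.proto, ∀ x : Pt d,
      p.translate x ∈ S.omegan n p →
      (p.translate x).carrier ⊆ interior (psupp (S.omegan n p)) →
      ((∀ y ∈ psupp (S.omegan n p), (S.lam ^ n)⁻¹ • y + x ∈ psupp (S.omegan n p)) ∧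
       (∃! y₀ : Pt d, (S.lam ^ n)⁻¹ • y₀ + x = y₀) ∧
       (∀ y₀ : Pt d, (S.lam ^ n)⁻¹ • y₀ + x = y₀ →
         p.translate (x - y₀) ∈ S.omegan n (p.translate (x - y₀)) ∧
         (0 : Pt d) ∈ interior (p.translate (x - y₀)).carrier ∧
         (⋃ k : ℕ, S.omegan (k * n) (p.translate (x - y₀))) ∈ S.Omega ∧
         S.subIter n (⋃ k : ℕ, S.omegan (k * n) (p.translate (x - y₀))) =
           ⋃ k : ℕ, S.omegan (k * n) (p.translate (x - y₀)) ∧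
         {t' ∈ ⋃ k : ℕ, S.omegan (k * n) (p.translate (x - y₀)) |
            (0 : Pt d) ∈ t'.carrier} = {p.translate (x - y₀)}))) := by
  exact ⟨part1 S hA1, fun n hn p hp x hmem hint => part2 S n hn p hp x hmem hint⟩
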